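/- Let G be the chain of m ≥ 3 gadgets, where each gadget is K_5 minus an edge xy (with triangle vertices labeled 1,2,3 and x,y universal), chained by identifying the y vertex of each gadget with the x vertex of the next. If T is a spanning tree of G, A, B, C are three gadgets with B strictly between A and C, the restriction of T to each of A,B,C is the same labeled spanning tree of the gadget, and for some i ∈ {1,2,3}, dist_T(A_i, C_i) ≤ dist_G(A_i, C_i) + 1, then T contains both edges {x,i} and {y,i} in each of the gadgets A, B, C. -/

import Mathlib

open SimpleGraph

/-- The chain of m gadgets, each gadget being K_5 minus the edge xy
(triangle vertices 1,2,3 and universal vertices x, y), chained by identifying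
the y vertex of each gadget with the x vertex of the next. The "joints"
(x/y vertices) are `Sum.inl a` for `a : Fin (m+1)`; the triangle vertices of
gadget g are `Sum.inr (g, i)`. -/
def chainRel (m : ℕ) :
    (Fin (m + 1) ⊕ Fin m × Fin 3) → (Fin (m + 1) ⊕ Fin m × Fin 3) → Prop
  | .inl a, .inr (g, _) => (a : ℕ) = (g : ℕ) ∨ (a : ℕ) = (g : ℕ) + 1
  | .inr (g, _), .inr (g', _) => g = g'
  | _, _ => False

def chainG (m : ℕ) : SimpleGraph (Fin (m + 1) ⊕ Fin m × Fin 3) :=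
  SimpleGraph.fromRel (chainRel m)

/-- The five vertices of gadget g, indexed as 0 = x, 1, 2, 3 = triangle, 4 = y. -/
def gvx (m : ℕ) (g : Fin m) : Fin 5 → (Fin (m + 1) ⊕ Fin m × Fin 3) :=
  ![Sum.inl g.castSucc, Sum.inr (g, 0), Sum.inr (g, 1), Sum.inr (g, 2), Sum.inl g.succ]

namespace ChainAux

variable {m : ℕ}

abbrev V (m : ℕ) := Fin (m + 1) ⊕ Fin m × Fin 3

/-- index level of a vertex -/
def jval : V m → ℕ := Sum.elim Fin.val (fun p => p.1.val + 1)

lemma gvx_tri (g : Fin m) (t : Fin 3) : gvx m g t.succ.castSucc = Sum.inr (g, t) := by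
  fin_cases t <;> rfl

lemma chainG_adj {u v : V m} :
    (chainG m).Adj u v ↔ u ≠ v ∧ (chainRel m u v ∨ chainRel m v u) := by
  simp [chainG, fromRel_adj]

lemma cross {k : Fin (m + 1)} {u v : V m} (h : (chainG m).Adj u v)
    (hu : jval u ≤ k.val) (hv : k.val < jval v) : u = Sum.inl k := by
  rw [chainG_adj] at h
  obtain ⟨-, h⟩ := h
  cases u with
  | inl j => cases v with
    | inl j' => simp [chainRel] at h
    | inr p =>
        simp only [chainRel, or_false, false_or] at h
        simp only [jval, Sum.elim_inl, Sum.elim_inr] at hu hv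
        have : j.val = k.val := by omega
        exact congrArg Sum.inl (Fin.ext this)
  | inr p => cases v with
    | inl j' =>
        simp only [chainRel, or_false, false_or] at h
        simp only [jval, Sum.elim_inl, Sum.elim_inr] at hu hv
        omega
    | inr p' =>
        simp only [chainRel, or_false, false_or] at h
        simp only [jval, Sum.elim_inr] at hu hv
        rcases h with h | h <;> omega

lemma walk_mem {T : SimpleGraph (V m)} (hT : T ≤ chainG m) {k : Fin (m + 1)}
    {u w : V m} (p : T.Walk u w) (hu : jval u ≤ k.val) (hw : k.val < jval w) :
    (Sum.inl k : V m) ∈ p.support := by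
  induction p with
  | nil => omega
  | @cons u x w h p ih =>
      by_cases hx : jval x ≤ k.val
      · exact List.mem_cons_of_mem _ (ih hx hw)
      · have := cross (hT h) hu (by omega)
        subst this
        exact List.mem_cons_self

lemma split {T : SimpleGraph (V m)} (hT : T ≤ chainG m) (hc : T.Connected)
    (k : Fin (m + 1)) {u w : V m} (hu : jval u ≤ k.val) (hw : k.val < jval w) :
    T.dist u w = T.dist u (Sum.inl k) + T.dist (Sum.inl k) w := by
  refine le_antisymm (hc.dist_triangle) ?_
  obtain ⟨p, hp⟩ := hc.exists_walk_length_eq_dist u w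
  have hm := walk_mem hT p hu hw
  calc T.dist u (Sum.inl k) + T.dist (Sum.inl k) w
      ≤ (p.takeUntil _ hm).length + (p.dropUntil _ hm).length :=
        Nat.add_le_add (dist_le _) (dist_le _)
    _ = p.length := by rw [← Walk.length_append, p.take_spec hm]
    _ = T.dist u w := hp

lemma dist_two_exists {T : SimpleGraph (V m)} {u w : V m}
    (h : T.dist u w = 2) : ∃ v, T.Adj u v ∧ T.Adj v w := by
  obtain ⟨p, hp⟩ := exists_walk_of_dist_ne_zero (by omega : T.dist u w ≠ 0)
  rw [h] at hp
  cases p with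
  | nil => simp at hp
  | cons h1 q =>
    cases q with
    | nil => simp at hp
    | cons h2 r =>
      cases r with
      | nil => exact ⟨_, h1, h2⟩
      | cons h3 s => simp only [Walk.length_cons] at hp; omega


variable {T : SimpleGraph (V m)}

lemma inl_inl_not_adj (j j' : Fin (m+1)) : ¬ (chainG m).Adj (Sum.inl j) (Sum.inl j') := by
  rw [chainG_adj]; rintro ⟨-, h | h⟩ <;> exact h

lemma adj_inl_inr (j : Fin (m+1)) (g : Fin m) (t : Fin 3)
    (h : j.val = g.val ∨ j.val = g.val + 1) : (chainG m).Adj (Sum.inl j) (Sum.inr (g,t)) := by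
  rw [chainG_adj]
  exact ⟨by simp, Or.inl h⟩

lemma dist_ge_two (hT : T ≤ chainG m) (hc : T.Connected) {j j' : Fin (m+1)}
    (h : j ≠ j') : 2 ≤ T.dist (Sum.inl j) (Sum.inl j') := by
  have h0 : T.dist (Sum.inl j) (Sum.inl j') ≠ 0 := by
    simp only [ne_eq, hc.dist_eq_zero_iff]
    simp [h]
  have h1 : T.dist (Sum.inl j) (Sum.inl j') ≠ 1 := by
    simp only [ne_eq, dist_eq_one_iff_adj]
    exact fun hadj => inl_inl_not_adj _ _ (hT hadj)
  omega

lemma lowerJ (hT : T ≤ chainG m) (hc : T.Connected) (e : Fin m) (i : Fin 3) :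
    ∀ d j (hj : j < m + 1), j + d = e.val →
      2 * d + T.dist (Sum.inl e.castSucc) (Sum.inr (e,i)) ≤
        T.dist (Sum.inl ⟨j, hj⟩ : V m) (Sum.inr (e,i)) := by
  intro d
  induction d with
  | zero =>
      intro j hj hje
      have : (⟨j, hj⟩ : Fin (m+1)) = e.castSucc := Fin.ext (by simpa using hje)
      rw [this]; omega
  | succ d ih =>
      intro j hj hje
      have hj1 : j + 1 < m + 1 := by have := e.isLt; omega
      have hsplit := split hT hc (⟨j+1, hj1⟩ : Fin (m+1))
        (u := (Sum.inl ⟨j, hj⟩ : V m)) (w := Sum.inr (e,i))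
        (by simp [jval]) (by simp [jval]; omega)
      have h2 : 2 ≤ T.dist (Sum.inl ⟨j, hj⟩ : V m) (Sum.inl ⟨j+1, hj1⟩) :=
        dist_ge_two hT hc (by simp [Fin.ext_iff])
      have := ih (j+1) hj1 (by omega)
      omega

lemma midJ (hT : T ≤ chainG m) (hc : T.Connected) (b e : Fin m) (i : Fin 3)
    (hbe : b.val < e.val) :
    ∀ d j (hj : j < m + 1), j + d = b.val →
      2 * d + T.dist (Sum.inl b.castSucc) (Sum.inr (e,i)) ≤
        T.dist (Sum.inl ⟨j, hj⟩ : V m) (Sum.inr (e,i)) := by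
  intro d
  induction d with
  | zero =>
      intro j hj hje
      have : (⟨j, hj⟩ : Fin (m+1)) = b.castSucc := Fin.ext (by simpa using hje)
      rw [this]; omega
  | succ d ih =>
      intro j hj hje
      have hj1 : j + 1 < m + 1 := by have := b.isLt; omega
      have hsplit := split hT hc (⟨j+1, hj1⟩ : Fin (m+1))
        (u := (Sum.inl ⟨j, hj⟩ : V m)) (w := Sum.inr (e,i))
        (by simp [jval]) (by simp [jval]; omega)
      have h2 : 2 ≤ T.dist (Sum.inl ⟨j, hj⟩ : V m) (Sum.inl ⟨j+1, hj1⟩) :=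
        dist_ge_two hT hc (by simp [Fin.ext_iff])
      have := ih (j+1) hj1 (by omega)
      omega

lemma upperG (e : Fin m) (i : Fin 3) :
    ∀ d (g : ℕ) (hg : g < m), g + d = e.val →
      ∃ p : (chainG m).Walk (Sum.inr (⟨g, hg⟩, i) : V m) (Sum.inr (e,i)), p.length = 2 * d := by
  intro d
  induction d with
  | zero =>
      intro g hg hge
      have he : e = (⟨g, hg⟩ : Fin m) := Fin.ext (by simp; omega)
      subst he
      exact ⟨Walk.nil, rfl⟩
  | succ d ih =>
      intro g hg hge
      have hg1 : g + 1 < m := by have := e.isLt; omega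
      obtain ⟨p, hp⟩ := ih (g+1) hg1 (by omega)
      have hj1 : g + 1 < m + 1 := by omega
      have a1 : (chainG m).Adj (Sum.inr (⟨g, hg⟩, i) : V m) (Sum.inl ⟨g+1, hj1⟩) :=
        ((adj_inl_inr ⟨g+1, hj1⟩ ⟨g, hg⟩ i (Or.inr rfl))).symm
      have a2 : (chainG m).Adj (Sum.inl ⟨g+1, hj1⟩ : V m) (Sum.inr (⟨g+1, hg1⟩, i)) :=
        adj_inl_inr _ _ _ (Or.inl rfl)
      exact ⟨Walk.cons a1 (Walk.cons a2 p), by simp [hp]; ring⟩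

lemma no_two_paths {W : Type*} {G : SimpleGraph W} (h : G.IsAcyclic) {u w : W}
    {p q : G.Walk u w} (hp : p.IsPath) (hq : q.IsPath) (hl : p.length ≠ q.length) : False :=
  hl (congrArg (fun r : G.Path u w => r.1.length) (h.path_unique ⟨p, hp⟩ ⟨q, hq⟩))


/- neighbor classification lemmas -/
lemma mid_neighbor {b : Fin m} {v : V m}
    (h1 : (chainG m).Adj (Sum.inl b.castSucc) v) (h2 : (chainG m).Adj v (Sum.inl b.succ)) :
    ∃ s : Fin 3, v = Sum.inr (b, s) := by
  cases v with
  | inl j => exact absurd h1 (inl_inl_not_adj _ _)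
  | inr p =>
      obtain ⟨g, t⟩ := p
      refine ⟨t, ?_⟩
      have hgb : g = b := by
        rw [chainG_adj] at h1 h2
        obtain ⟨-, h1 | h1⟩ := h1 <;> obtain ⟨-, h2 | h2⟩ := h2 <;>
          simp only [chainRel] at h1 h2 <;>
          first
          | exact absurd h1 not_false
          | exact absurd h2 not_false
          | exact Fin.ext (by simp only [Fin.coe_castSucc, Fin.val_succ] at h1 h2; omega)
      rw [hgb]

lemma cEnd_neighbor {e : Fin m} {i : Fin 3} {v : V m}
    (h1 : (chainG m).Adj (Sum.inl e.castSucc) v) (h2 : (chainG m).Adj v (Sum.inr (e, i))) :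
    ∃ s : Fin 3, s ≠ i ∧ v = Sum.inr (e, s) := by
  cases v with
  | inl j => exact absurd h1 (inl_inl_not_adj _ _)
  | inr p =>
      obtain ⟨g, t⟩ := p
      have hne := h2.ne
      have hge : g = e := by
        rw [chainG_adj] at h2
        obtain ⟨-, h2 | h2⟩ := h2 <;> simp only [chainRel] at h2
        · exact h2
        · exact h2.symm
      subst hge
      exact ⟨t, fun hti => hne (by rw [hti]), rfl⟩

lemma aEnd_neighbor {e : Fin m} {i : Fin 3} {v : V m}
    (h1 : (chainG m).Adj (Sum.inr (e, i)) v) (h2 : (chainG m).Adj v (Sum.inl e.succ)) :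
    ∃ s : Fin 3, s ≠ i ∧ v = Sum.inr (e, s) := by
  cases v with
  | inl j => exact absurd h2 (inl_inl_not_adj _ _)
  | inr p =>
      obtain ⟨g, t⟩ := p
      have hge : g = e := by
        rw [chainG_adj] at h1
        obtain ⟨-, h1 | h1⟩ := h1 <;> simp only [chainRel] at h1 <;> [exact h1.symm; exact h1]
      subst hge
      have hti : t ≠ i := by
        rintro rfl
        exact h1.ne rfl
      exact ⟨t, hti, rfl⟩

end ChainAux




open ChainAux

/-- If the restriction of a spanning tree T to three gadgets A, B, C (with B between
A and C) is the same labeled spanning tree, and T provides a 1-approximating path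
between A_i and C_i, then T contains the edges {x,i} and {y,i} in all of A, B, C. -/
theorem stmt6 :
    ∀ m : ℕ, 3 ≤ m →
    ∀ T : SimpleGraph (Fin (m + 1) ⊕ Fin m × Fin 3),
      T ≤ chainG m → T.Connected → T.IsAcyclic →
    ∀ a b c : Fin m, (a : ℕ) < (b : ℕ) → (b : ℕ) < (c : ℕ) →
      (∀ p q : Fin 5, T.Adj (gvx m a p) (gvx m a q) ↔ T.Adj (gvx m b p) (gvx m b q)) →
      (∀ p q : Fin 5, T.Adj (gvx m a p) (gvx m a q) ↔ T.Adj (gvx m c p) (gvx m c q)) →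
    ∀ i : Fin 3,
      T.dist (gvx m a i.succ.castSucc) (gvx m c i.succ.castSucc) ≤
        (chainG m).dist (gvx m a i.succ.castSucc) (gvx m c i.succ.castSucc) + 1 →
      ∀ g ∈ ({a, b, c} : Set (Fin m)),
        T.Adj (gvx m g 0) (gvx m g i.succ.castSucc) ∧
        T.Adj (gvx m g 4) (gvx m g i.succ.castSucc) := by
  intro m hm3 T hT hc hacy a b c habl hbcl hrab hrac i hdist
  simp only [gvx_tri] at hdist
  -- basic vertex abbreviations
  have g0 : ∀ g : Fin m, gvx m g 0 = Sum.inl g.castSucc := fun _ => rfl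
  have g4 : ∀ g : Fin m, gvx m g 4 = Sum.inl g.succ := fun _ => rfl
  -- distances
  set α := T.dist (Sum.inr (a, i)) (Sum.inl a.succ) with hα_def
  set L := T.dist (Sum.inl b.castSucc) (Sum.inl b.succ) with hL_def
  set γ := T.dist (Sum.inl c.castSucc) (Sum.inr (c, i)) with hγ_def
  -- upper bound on dist via chainG
  have hup : T.dist (Sum.inr (a, i)) (Sum.inr (c, i)) ≤ 2 * (c.val - a.val) + 1 := by
    obtain ⟨p, hp⟩ := upperG c i (c.val - a.val) a.val a.isLt (by omega)
    have hle : (chainG m).dist (Sum.inr ((⟨a.val, a.isLt⟩ : Fin m), i)) (Sum.inr (c, i)) ≤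
        2 * (c.val - a.val) := hp ▸ dist_le p
    rw [Fin.eta] at hle
    omega
  -- split at a.succ
  have h1 : T.dist (Sum.inr (a, i)) (Sum.inr (c, i)) =
      α + T.dist (Sum.inl a.succ) (Sum.inr (c, i)) := by
    exact split hT hc a.succ (by simp [jval]) (by simp [jval]; omega)
  -- lower bound from a.succ to b.castSucc
  have hja : a.val + 1 < m + 1 := by omega
  have hsa : (Sum.inl a.succ : V m) = Sum.inl (⟨a.val + 1, hja⟩ : Fin (m+1)) := rfl
  have h2 : 2 * (b.val - (a.val + 1)) + T.dist (Sum.inl b.castSucc) (Sum.inr (c, i)) ≤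
      T.dist (Sum.inl a.succ) (Sum.inr (c, i)) := by
    rw [hsa]
    exact midJ hT hc b c i hbcl (b.val - (a.val+1)) (a.val+1) hja (by omega)
  -- split at b.succ
  have h3 : T.dist (Sum.inl b.castSucc) (Sum.inr (c, i)) =
      L + T.dist (Sum.inl b.succ) (Sum.inr (c, i)) := by
    exact split hT hc b.succ (by simp [jval]) (by simp [jval]; omega)
  have hjb : b.val + 1 < m + 1 := by omega
  have hsb : (Sum.inl b.succ : V m) = Sum.inl (⟨b.val + 1, hjb⟩ : Fin (m+1)) := rfl
  have h4 : 2 * (c.val - (b.val + 1)) + γ ≤ T.dist (Sum.inl b.succ) (Sum.inr (c, i)) := by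
    rw [hsb]
    exact lowerJ hT hc c i (c.val - (b.val+1)) (b.val+1) hjb (by omega)
  have hL2 : 2 ≤ L := dist_ge_two hT hc (by simp [Fin.ext_iff])
  have hα1 : 1 ≤ α := hc.pos_dist_of_ne (by simp)
  have hγ1 : 1 ≤ γ := hc.pos_dist_of_ne (by simp)
  have hkey : α + γ + L ≤ 5 := by omega
  have hcases : (α = 1 ∧ γ = 1) ∨ (α = 1 ∧ γ = 2 ∧ L = 2) ∨ (α = 2 ∧ γ = 1 ∧ L = 2) := by
    omega
  rcases hcases with ⟨hA, hG⟩ | ⟨hA, hG, hL⟩ | ⟨hA, hG, hL⟩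
  · -- good case
    have e_a_i4 : T.Adj (gvx m a i.succ.castSucc) (gvx m a 4) := by
      rw [gvx_tri, g4]
      exact dist_eq_one_iff_adj.mp hA
    have e_c_0i : T.Adj (gvx m c 0) (gvx m c i.succ.castSucc) := by
      rw [gvx_tri, g0]
      exact dist_eq_one_iff_adj.mp hG
    have e_a_0i : T.Adj (gvx m a 0) (gvx m a i.succ.castSucc) := (hrac 0 _).mpr e_c_0i
    intro g hg
    simp only [Set.mem_insert_iff, Set.mem_singleton_iff] at hg
    rcases hg with rfl | rfl | rfl
    · exact ⟨e_a_0i, e_a_i4.symm⟩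
    · exact ⟨(hrab 0 _).mp e_a_0i, (hrab 4 _).mp e_a_i4.symm⟩
    · exact ⟨e_c_0i, (hrac 4 _).mp e_a_i4.symm⟩
  · -- case α = 1, γ = 2, L = 2 : contradiction
    exfalso
    rw [hα_def] at hA
    rw [hγ_def] at hG
    rw [hL_def] at hL
    have hai4 : T.Adj (Sum.inr (a, i)) (Sum.inl a.succ) := dist_eq_one_iff_adj.mp hA
    obtain ⟨v, hv1, hv2⟩ := dist_two_exists hG
    obtain ⟨t', ht'i, rfl⟩ := cEnd_neighbor (hT hv1) (hT hv2)
    obtain ⟨w, hw1, hw2⟩ := dist_two_exists hL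
    obtain ⟨s, rfl⟩ := mid_neighbor (hT hw1) (hT hw2)
    have ea0s : T.Adj (Sum.inl a.castSucc) (Sum.inr (a, s)) := by
      have := (hrab 0 s.succ.castSucc).mpr (by rw [g0, gvx_tri]; exact hw1)
      rwa [g0, gvx_tri] at this
    have eas4 : T.Adj (Sum.inr (a, s)) (Sum.inl a.succ) := by
      have := (hrab s.succ.castSucc 4).mpr (by rw [g4, gvx_tri]; exact hw2)
      rwa [gvx_tri, g4] at this
    have ea0t : T.Adj (Sum.inl a.castSucc) (Sum.inr (a, t')) := by
      have := (hrac 0 t'.succ.castSucc).mpr (by rw [g0, gvx_tri]; exact hv1)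
      rwa [g0, gvx_tri] at this
    have eati : T.Adj (Sum.inr (a, t')) (Sum.inr (a, i)) := by
      have := (hrac t'.succ.castSucc i.succ.castSucc).mpr (by rw [gvx_tri, gvx_tri]; exact hv2)
      rwa [gvx_tri, gvx_tri] at this
    refine no_two_paths hacy (p := Walk.cons ea0s (Walk.cons eas4 Walk.nil))
      (q := Walk.cons ea0t (Walk.cons eati (Walk.cons hai4 Walk.nil))) ?_ ?_ (by simp)
    · simp [Walk.isPath_def, (Fin.castSucc_lt_succ : a.castSucc < a.succ).ne]
    · simp [Walk.isPath_def, (Fin.castSucc_lt_succ : a.castSucc < a.succ).ne, ht'i]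
  · -- case α = 2, γ = 1, L = 2 : contradiction
    exfalso
    rw [hα_def] at hA
    rw [hγ_def] at hG
    rw [hL_def] at hL
    have ea0i : T.Adj (Sum.inl a.castSucc) (Sum.inr (a, i)) := by
      have := (hrac 0 i.succ.castSucc).mpr (by rw [g0, gvx_tri]; exact dist_eq_one_iff_adj.mp hG)
      rwa [g0, gvx_tri] at this
    obtain ⟨v, hv1, hv2⟩ := dist_two_exists hA
    obtain ⟨t, hti, rfl⟩ := aEnd_neighbor (hT hv1) (hT hv2)
    obtain ⟨w, hw1, hw2⟩ := dist_two_exists hL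
    obtain ⟨s, rfl⟩ := mid_neighbor (hT hw1) (hT hw2)
    have ea0s : T.Adj (Sum.inl a.castSucc) (Sum.inr (a, s)) := by
      have := (hrab 0 s.succ.castSucc).mpr (by rw [g0, gvx_tri]; exact hw1)
      rwa [g0, gvx_tri] at this
    have eas4 : T.Adj (Sum.inr (a, s)) (Sum.inl a.succ) := by
      have := (hrab s.succ.castSucc 4).mpr (by rw [g4, gvx_tri]; exact hw2)
      rwa [gvx_tri, g4] at this
    refine no_two_paths hacy (p := Walk.cons ea0s (Walk.cons eas4 Walk.nil))
      (q := Walk.cons ea0i (Walk.cons hv1 (Walk.cons hv2 Walk.nil))) ?_ ?_ (by simp)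
    · simp [Walk.isPath_def, (Fin.castSucc_lt_succ : a.castSucc < a.succ).ne]
    · simp [Walk.isPath_def, (Fin.castSucc_lt_succ : a.castSucc < a.succ).ne, hti.symm]
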